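/- Let A₁, A₂, A₃ be symmetric positive semidefinite matrices with A₁ + A₂ + A₃ = I. Then the average over all 6 permutations σ of {1,2,3} of A_{σ(1)}A_{σ(2)}A_{σ(3)} is at least -(1/27)·I in the Loewner order. -/

import Mathlib

open Matrix

lemma psd_smul' {m : Type*} [Fintype m] {M : Matrix m m ℝ} (hM : M.PosSemidef)
    {c : ℝ} (hc : 0 ≤ c) : (c • M).PosSemidef := by
  have hT : Mᵀ = M := by simpa using hM.1.eq
  constructor
  · simp [Matrix.IsHermitian, Matrix.transpose_smul, hT]
  · intro x
    exact (hM.smul hc).2 x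

lemma psd_conj_sq {m : Type*} [Fintype m] [DecidableEq m] {M : Matrix m m ℝ}
    (hM : M.PosSemidef) (c : ℝ) :
    (M * ((M - c • 1) * (M - c • 1))).PosSemidef := by
  have hT : Mᵀ = M := by simpa using hM.1.eq
  have hH : (M - c • (1 : Matrix m m ℝ))ᴴ = M - c • 1 := by
    simp [Matrix.conjTranspose_sub, Matrix.conjTranspose_smul, hT]
  have hcomm : M * (M - c • (1 : Matrix m m ℝ)) = (M - c • 1) * M := by
    simp only [mul_sub, sub_mul, Matrix.mul_smul, Matrix.smul_mul, mul_one, one_mul]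
  have hrw : M * ((M - c • (1 : Matrix m m ℝ)) * (M - c • 1))
      = (M - c • 1) * M * (M - c • 1) := by
    rw [← mul_assoc, hcomm]
  rw [hrw]
  have h := hM.mul_mul_conjTranspose_same (M - c • 1)
  rw [hH] at h
  exact h

theorem stmt8 {n : ℕ} (A : Fin 3 → Matrix (Fin n) (Fin n) ℝ)
    (hA : ∀ i, (A i).PosSemidef)
    (hsum : A 0 + A 1 + A 2 = (1 : Matrix (Fin n) (Fin n) ℝ)) :
    ((1 / 6 : ℝ) • ∑ σ : Equiv.Perm (Fin 3), A (σ 0) * A (σ 1) * A (σ 2) +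
      (1 / 27 : ℝ) • (1 : Matrix (Fin n) (Fin n) ℝ)).PosSemidef := by
  have h0 := hA 0; have h1 := hA 1; have h2 := hA 2
  have hperm : (∑ σ : Equiv.Perm (Fin 3), A (σ 0) * A (σ 1) * A (σ 2))
      = A 0*A 1*A 2 + A 0*A 2*A 1 + A 1*A 0*A 2 + A 1*A 2*A 0 + A 2*A 0*A 1 + A 2*A 1*A 0 := by
    have huniv : (Finset.univ : Finset (Equiv.Perm (Fin 3))) =
      {1, Equiv.swap 0 1, Equiv.swap 0 2, Equiv.swap 1 2,
       Equiv.swap 0 1 * Equiv.swap 1 2, Equiv.swap 1 2 * Equiv.swap 0 1} := by decide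
    rw [huniv]
    rw [Finset.sum_insert (by decide), Finset.sum_insert (by decide),
        Finset.sum_insert (by decide), Finset.sum_insert (by decide),
        Finset.sum_insert (by decide), Finset.sum_singleton]
    norm_num [Equiv.swap_apply_def, Equiv.Perm.mul_apply]
    simp
    abel
  have hD : A 2 = 1 - A 0 - A 1 := by rw [← hsum]; abel
  have key : (1 / 6 : ℝ) • (∑ σ : Equiv.Perm (Fin 3), A (σ 0) * A (σ 1) * A (σ 2)) +
      (1 / 27 : ℝ) • (1 : Matrix (Fin n) (Fin n) ℝ)
      = (1/3 : ℝ) • (A 0 * ((A 0 - (3/4:ℝ)•1) * (A 0 - (3/4:ℝ)•1))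
          + A 1 * ((A 1 - (3/4:ℝ)•1) * (A 1 - (3/4:ℝ)•1))
          + A 2 * ((A 2 - (3/4:ℝ)•1) * (A 2 - (3/4:ℝ)•1)))
        + (7/432 : ℝ) • (1 : Matrix (Fin n) (Fin n) ℝ) := by
    rw [hperm, hD]
    simp only [smul_smul, mul_sub, sub_mul, mul_add, add_mul, smul_mul_assoc, mul_smul_comm,
      mul_one, one_mul, smul_add, smul_sub, mul_assoc]
    module
  rw [key]
  exact (psd_smul' (((psd_conj_sq h0 _).add (psd_conj_sq h1 _)).add (psd_conj_sq h2 _))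
      (by norm_num)).add (psd_smul' Matrix.PosSemidef.one (by norm_num))
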